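/- Let G be a k-uniform supertree with n vertices, m = (n−1)/(k−1) edges, and q pendent vertices, where n − m + 1 ≤ q ≤ n − 2, maximizing the signless Laplacian spectral radius among all such supertrees. Then G has degree sequence π = (q + 1 + m − n, 2, 2, ..., 2, 1, ..., 1) with n − q − 1 entries equal to 2 and q entries equal to 1; that is, G has exactly one vertex of degree greater than 2 and all non-pendent, non-maximal vertices have degree exactly 2. -/

import Mathlib

open scoped Classical BigOperators

namespace SLT

variable {V : Type*}

/-- A hypergraph (edge set over vertex type `V`) is `k`-uniform if every edge has exactly `k` vertices. -/
def IsUniform (k : ℕ) (E : Finset (Finset V)) : Prop :=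
  ∀ e ∈ E, e.card = k

/-- The degree of a vertex: the number of edges containing it. -/
noncomputable def degree (E : Finset (Finset V)) (v : V) : ℕ :=
  (E.filter (fun e => v ∈ e)).card

/-- `Chains vs es` : the alternating sequence of vertices `vs` and edges `es` forms a
walk, i.e. consecutive vertices both lie in the corresponding edge. -/
def Chains : List V → List (Finset V) → Prop
  | [_], [] => True
  | u :: v :: vs, e :: es => u ∈ e ∧ v ∈ e ∧ Chains (v :: vs) es
  | _, _ => False

/-- A path in a hypergraph: distinct vertices, distinct edges, all edges in `E`,
with consecutive vertices in the corresponding edge. -/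
def IsPath (E : Finset (Finset V)) (vs : List V) (es : List (Finset V)) : Prop :=
  vs.Nodup ∧ es.Nodup ∧ (∀ e ∈ es, e ∈ E) ∧ Chains vs es

/-- A hypergraph is connected if any two vertices are joined by a path. -/
def HConnected (E : Finset (Finset V)) : Prop :=
  ∀ u v : V, ∃ vs es, IsPath E vs es ∧ vs.head? = some u ∧ vs.getLast? = some v

/-- A cycle: at least two distinct edges, distinct vertices, closing up at the first vertex. -/
def IsCycle (E : Finset (Finset V)) (vs : List V) (es : List (Finset V)) : Prop :=
  2 ≤ es.length ∧ vs.Nodup ∧ es.Nodup ∧ (∀ e ∈ es, e ∈ E) ∧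
  ∃ u, vs.head? = some u ∧ Chains (vs ++ [u]) es

/-- A `k`-uniform supertree: connected and acyclic `k`-uniform hypergraph. -/
def IsSupertree (k : ℕ) (E : Finset (Finset V)) : Prop :=
  IsUniform k E ∧ HConnected E ∧ ∀ vs es, ¬ IsCycle E vs es

/-- The quadratic form `x^T (Q(G) x^{k-1})` of the signless Laplacian tensor of a
`k`-uniform hypergraph. -/
noncomputable def qform (k : ℕ) (E : Finset (Finset V)) (x : V → ℝ) : ℝ :=
  ∑ e ∈ E, ((∑ i ∈ e, x i ^ k) + k * ∏ i ∈ e, x i)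

/-- The `i`-th component of `Q(G) x^{k-1}` for a `k`-uniform hypergraph. -/
noncomputable def Qcomp (k : ℕ) (E : Finset (Finset V)) (x : V → ℝ) (i : V) : ℝ :=
  ∑ e ∈ E.filter (fun e => i ∈ e), (x i ^ (k-1) + ∏ j ∈ e.erase i, x j)

/-- The signless Laplacian spectral radius `q(G)`, via Qi's variational characterization:
the supremum of the quadratic form over nonnegative vectors with `∑ x_v^k = 1`. -/
noncomputable def qrad [Fintype V] (k : ℕ) (E : Finset (Finset V)) : ℝ :=
  sSup {r | ∃ x : V → ℝ, (∀ v, 0 ≤ x v) ∧ (∑ v, x v ^ k) = 1 ∧ r = qform k E x}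

/-- `x` is the principal eigenvector of `Q(G)`: positive, unit (`∑ x_v^k = 1`), and an
eigenvector for the eigenvalue `q(G)`. -/
def IsPrincipalEig [Fintype V] (k : ℕ) (E : Finset (Finset V)) (x : V → ℝ) : Prop :=
  (∀ v, 0 < x v) ∧ (∑ v, x v ^ k) = 1 ∧
  ∀ i, Qcomp k E x i = qrad k E * x i ^ (k-1)

/-- The degree sequence of a hypergraph, as a multiset. -/
noncomputable def degSeq [Fintype V] (E : Finset (Finset V)) : Multiset ℕ :=
  Finset.univ.val.map (degree E)

/-- The number of pendent (degree-1) vertices. -/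
noncomputable def pendentCount [Fintype V] (E : Finset (Finset V)) : ℕ :=
  (Finset.univ.filter (fun v => degree E v = 1)).card

section A
variable {F : Finset (Finset V)}
lemma chains_nil (es : List (Finset V)) : ¬ Chains ([] : List V) es := by
  cases es <;> simp [Chains]
lemma chains_ne_nil {vs : List V} {es : List (Finset V)} (h : Chains vs es) : vs ≠ [] := by
  rintro rfl; exact chains_nil es h
lemma chains_single {a : V} {es : List (Finset V)} (h : Chains [a] es) : es = [] := by
  cases es with
  | nil => rfl
  | cons e es => simp [Chains] at h
lemma chains_cons {a b : V} {vs : List V} {es : List (Finset V)}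
    (h : Chains (a :: b :: vs) es) :
    ∃ e es', es = e :: es' ∧ a ∈ e ∧ b ∈ e ∧ Chains (b :: vs) es' := by
  cases es with
  | nil => simp [Chains] at h
  | cons e es' => exact ⟨e, es', rfl, h.1, h.2.1, h.2.2⟩
lemma chains_length {vs : List V} {es : List (Finset V)} (h : Chains vs es) :
    vs.length = es.length + 1 := by
  induction vs generalizing es with
  | nil => exact absurd h (chains_nil es)
  | cons a vs ih =>
    cases vs with
    | nil => rw [chains_single h]; rfl
    | cons b vs =>
      obtain ⟨e, es', rfl, _, _, h'⟩ := chains_cons h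
      simpa using ih h'
lemma chains_head_mem {a : V} {vs : List V} {e : Finset V} {es : List (Finset V)}
    (h : Chains (a :: vs) (e :: es)) : a ∈ e := by
  cases vs with
  | nil => exact absurd (chains_single h) (by simp)
  | cons b vs => exact h.1
lemma chains_glue : ∀ {xs : List V} {a : V} {ys : List V} {es₁ es₂ : List (Finset V)},
    Chains (xs ++ [a]) es₁ → Chains (a :: ys) es₂ →
    Chains (xs ++ a :: ys) (es₁ ++ es₂) := by
  intro xs
  induction xs with
  | nil =>
    intro a ys es₁ es₂ h₁ h₂
    have : es₁ = [] := chains_single h₁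
    subst this; simpa using h₂
  | cons x xs ih =>
    intro a ys es₁ es₂ h₁ h₂
    cases xs with
    | nil =>
      obtain ⟨e, es', rfl, hx, ha, h'⟩ := chains_cons h₁
      have : es' = [] := chains_single h'
      subst this
      exact ⟨hx, ha, h₂⟩
    | cons x' xs' =>
      obtain ⟨e, es', rfl, hx, hx', h'⟩ := chains_cons h₁
      exact ⟨hx, hx', ih h' h₂⟩
lemma chains_split : ∀ {xs : List V} {a : V} {ys : List V} {es : List (Finset V)},
    Chains (xs ++ a :: ys) es →
    Chains (xs ++ [a]) (es.take xs.length) ∧ Chains (a :: ys) (es.drop xs.length) := by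
  intro xs
  induction xs with
  | nil => intro a ys es h; exact ⟨trivial, by simpa using h⟩
  | cons x xs ih =>
    intro a ys es h
    cases xs with
    | nil =>
      obtain ⟨e, es', rfl, hx, ha, h'⟩ := chains_cons h
      exact ⟨⟨hx, ha, trivial⟩, by simpa using h'⟩
    | cons x' xs' =>
      obtain ⟨e, es', rfl, hx, hx', h'⟩ := chains_cons h
      obtain ⟨c₁, c₂⟩ := ih h'
      exact ⟨⟨hx, hx', c₁⟩, c₂⟩
lemma chains_concat {vs : List V} {es : List (Finset V)} {b c : V} {e : Finset V}
    (h : Chains vs es) (hb : vs.getLast? = some b) (hbe : b ∈ e) (hce : c ∈ e) :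
    Chains (vs ++ [c]) (es ++ [e]) := by
  have hne : vs ≠ [] := chains_ne_nil h
  obtain ⟨xs, rfl⟩ : ∃ xs, vs = xs ++ [b] := by
    refine ⟨vs.dropLast, ?_⟩
    have h1 := List.dropLast_append_getLast hne
    have h2 : vs.getLast hne = b := by
      rw [List.getLast?_eq_getLast hne] at hb; exact Option.some_inj.mp hb
    rw [h2] at h1; exact h1.symm
  have hstep : Chains (b :: [c]) [e] := ⟨hbe, hce, trivial⟩
  have := chains_glue h hstep
  simpa using this
lemma chains_reverse {vs : List V} {es : List (Finset V)} (h : Chains vs es) :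
    Chains vs.reverse es.reverse := by
  induction vs generalizing es with
  | nil => exact absurd h (chains_nil es)
  | cons a vs ih =>
    cases vs with
    | nil => rw [chains_single h]; exact trivial
    | cons b vs =>
      obtain ⟨e, es', rfl, ha, hb, h'⟩ := chains_cons h
      have hrev := ih h'
      have : Chains ((b :: vs).reverse ++ [a]) (es'.reverse ++ [e]) :=
        chains_concat hrev (by rw [List.getLast?_reverse]; rfl) hb ha
      simpa using this

lemma exists_dup_decomp {α : Type*} {l : List α} (h : ¬ l.Nodup) :
    ∃ (l₁ : List α) (x : α) (l₂ l₃ : List α), l = l₁ ++ x :: l₂ ++ x :: l₃ := by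
  induction l with
  | nil => simp at h
  | cons a l ih =>
    by_cases ha : a ∈ l
    · obtain ⟨s, t, rfl⟩ := List.append_of_mem ha
      exact ⟨[], a, s, t, rfl⟩
    · have hl : ¬ l.Nodup := fun hn => h (List.nodup_cons.mpr ⟨ha, hn⟩)
      obtain ⟨l₁, x, l₂, l₃, rfl⟩ := ih hl
      exact ⟨a :: l₁, x, l₂, l₃, rfl⟩

lemma first_occ {α : Type*} {l : List α} {x : α} (h : x ∈ l) :
    ∃ s t, l = s ++ x :: t ∧ x ∉ s := by
  induction l with
  | nil => simp at h
  | cons a l ih =>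
    by_cases hax : a = x
    · exact ⟨[], l, by rw [hax]; rfl, by simp⟩
    · have hx : x ∈ l := by
        rcases List.mem_cons.mp h with h' | h'
        · exact absurd h'.symm hax
        · exact h'
      obtain ⟨s, t, rfl, hns⟩ := ih hx
      exact ⟨a :: s, t, rfl, by simp [hns, Ne.symm hax]⟩

lemma getLast?_append_of_ne_nil {α : Type*} (xs : List α) {ys : List α} (h : ys ≠ []) :
    (xs ++ ys).getLast? = ys.getLast? := by
  rw [List.getLast?_append]
  rw [List.getLast?_eq_getLast h]
  simp

/-- Reachability by a path within an edge collection. -/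
def Reach (F : Finset (Finset V)) (a b : V) : Prop :=
  ∃ vs es, IsPath F vs es ∧ vs.head? = some a ∧ vs.getLast? = some b

lemma reach_of_walk_aux {F : Finset (Finset V)} :
    ∀ N (vs : List V) (es : List (Finset V)), vs.length ≤ N →
      Chains vs es → (∀ e ∈ es, e ∈ F) →
      ∀ a b, vs.head? = some a → vs.getLast? = some b →
      ∃ vs' es', IsPath F vs' es' ∧ vs'.head? = some a ∧ vs'.getLast? = some b ∧
        ∀ e ∈ es', e ∈ es := by
  intro N
  induction N with
  | zero =>
    intro vs es hlen hc _ a b hh _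
    cases vs with
    | nil => simp at hh
    | cons x xs => simp at hlen
  | succ N ih =>
    intro vs es hlen hc hmem a b hh hl
    by_cases hvnd : vs.Nodup
    · by_cases hend : es.Nodup
      · exact ⟨vs, es, ⟨hvnd, hend, hmem, hc⟩, hh, hl, fun e he => he⟩
      · -- duplicate edge
        obtain ⟨f₁, e, f₂, f₃, rfl⟩ := exists_dup_decomp hend
        have hvlen : vs.length = f₁.length + f₂.length + f₃.length + 3 := by
          have := chains_length hc; simp at this; omega
        set i := f₁.length with hi
        obtain ⟨aa, rest, hdrop⟩ : ∃ aa rest, vs.drop i = aa :: rest := by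
          cases hd : vs.drop i with
          | nil =>
            exfalso
            have := congrArg List.length hd
            simp at this; omega
          | cons aa rest => exact ⟨aa, rest, rfl⟩
        have hvs₁ : vs = vs.take i ++ aa :: rest := by rw [← hdrop, List.take_append_drop]
        have htklen : (vs.take i).length = i := by rw [List.length_take]; omega
        have hrlen : (aa :: rest).length = f₂.length + f₃.length + 3 := by
          have := congrArg List.length hvs₁
          simp only [List.length_append, htklen, List.length_cons] at this
          simp only [List.length_cons]
          omega
        have hcA := hc
        rw [hvs₁] at hcA
        have hsp := chains_split (xs := vs.take i) (a := aa) (ys := rest) hcA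
        rw [htklen] at hsp
        obtain ⟨h₁, h₂⟩ := hsp
        have hestake : (f₁ ++ e :: f₂ ++ e :: f₃).take i = f₁ := by
          rw [hi, List.append_assoc]; exact List.take_left
        have hesdrop : (f₁ ++ e :: f₂ ++ e :: f₃).drop i = e :: (f₂ ++ e :: f₃) := by
          rw [hi, List.append_assoc]; exact List.drop_left
        rw [hestake] at h₁
        rw [hesdrop] at h₂
        have haa : aa ∈ e := chains_head_mem h₂
        set j' := f₂.length + 1 with hj'
        have hrest_len : rest.length = f₂.length + f₃.length + 2 := by
          have := hrlen
          simp only [List.length_cons] at this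
          omega
        obtain ⟨bb, rest₂, hdrop₂⟩ : ∃ bb rest₂, (aa :: rest).drop j' = bb :: rest₂ := by
          cases hd : (aa :: rest).drop j' with
          | nil =>
            exfalso
            have := congrArg List.length hd
            simp only [List.length_drop, List.length_cons, List.length_nil] at this
            omega
          | cons bb rest₂ => exact ⟨bb, rest₂, rfl⟩
        have hvs₂ : aa :: rest = (aa :: rest).take j' ++ bb :: rest₂ := by
          rw [← hdrop₂, List.take_append_drop]
        have htklen₂ : ((aa :: rest).take j').length = j' := by
          rw [List.length_take]; omega
        have hcB := h₂
        rw [hvs₂] at hcB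
        have hsp₂ := chains_split (xs := (aa :: rest).take j') (a := bb) (ys := rest₂) hcB
        rw [htklen₂] at hsp₂
        have h₄ := hsp₂.2
        have hesdrop₂ : (e :: (f₂ ++ e :: f₃)).drop j' = e :: f₃ := by
          have h1 : (e :: (f₂ ++ e :: f₃)) = (e :: f₂) ++ (e :: f₃) := by simp
          have h2 : j' = (e :: f₂).length := by simp [hj']
          rw [h1, h2, List.drop_left]
        rw [hesdrop₂] at h₄
        obtain ⟨cc, rest₃, hrest₂⟩ : ∃ cc rest₃, rest₂ = cc :: rest₃ := by
          cases hr : rest₂ with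
          | nil => exfalso; rw [hr] at h₄; exact absurd (chains_single h₄) (by simp)
          | cons cc rest₃ => exact ⟨cc, rest₃, rfl⟩
        rw [hrest₂] at h₄ hdrop₂ hvs₂
        obtain ⟨e'', es'', heq, hbb, hcc, h₅⟩ := chains_cons h₄
        injection heq with he1 he2
        subst he1; subst he2
        have hmid : Chains (aa :: cc :: rest₃) (e :: f₃) := ⟨haa, hcc, h₅⟩
        have hglue := chains_glue (xs := vs.take i) (a := aa) (ys := cc :: rest₃) h₁ hmid
        have hmem' : ∀ f ∈ f₁ ++ e :: f₃, f ∈ F := by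
          intro f hf
          apply hmem
          simp only [List.mem_append, List.mem_cons] at hf ⊢
          tauto
        have hd2 : rest₃.length = f₃.length := by
          have := congrArg List.length hdrop₂
          simp only [List.length_drop, List.length_cons] at this
          omega
        have hlen' : (vs.take i ++ aa :: cc :: rest₃).length ≤ N := by
          simp only [List.length_append, htklen, List.length_cons]
          omega
        have hh' : (vs.take i ++ aa :: cc :: rest₃).head? = some a := by
          rw [hvs₁] at hh
          rw [List.head?_append] at hh ⊢
          simpa using hh
        have hl' : (vs.take i ++ aa :: cc :: rest₃).getLast? = some b := by
          rw [getLast?_append_of_ne_nil _ (by simp : (aa :: cc :: rest₃) ≠ [])]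
          rw [hvs₁, getLast?_append_of_ne_nil _ (by simp : (aa :: rest) ≠ [])] at hl
          rw [hvs₂, getLast?_append_of_ne_nil _ (by simp : (bb :: cc :: rest₃) ≠ [])] at hl
          rw [List.getLast?_cons_cons] at hl
          rw [List.getLast?_cons_cons]
          exact hl
        obtain ⟨vs', es', hp, hh'', hl'', hsub⟩ := ih _ _ hlen' hglue hmem' a b hh' hl'
        refine ⟨vs', es', hp, hh'', hl'', fun f hf => ?_⟩
        have := hsub f hf
        simp only [List.mem_append, List.mem_cons] at this ⊢
        tauto
    · -- duplicate vertex
      obtain ⟨l₁, x, l₂, l₃, rfl⟩ := exists_dup_decomp hvnd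
      have hcA := hc
      rw [show l₁ ++ x :: l₂ ++ x :: l₃ = (l₁ ++ x :: l₂) ++ x :: l₃ by simp] at hcA
      have hcB := hc
      rw [show l₁ ++ x :: l₂ ++ x :: l₃ = l₁ ++ x :: (l₂ ++ x :: l₃) by simp] at hcB
      have h₂ := (chains_split (xs := l₁ ++ x :: l₂) (a := x) (ys := l₃) hcA).2
      have h₁ := (chains_split (xs := l₁) (a := x) (ys := l₂ ++ x :: l₃) hcB).1
      have hglue := chains_glue (xs := l₁) (a := x) (ys := l₃) h₁ h₂
      have hmem' : ∀ f ∈ (es.take l₁.length ++ es.drop (l₁ ++ x :: l₂).length), f ∈ F := by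
        intro f hf
        rcases List.mem_append.mp hf with hf | hf
        · exact hmem f ((List.take_sublist _ _).subset hf)
        · exact hmem f ((List.drop_sublist _ _).subset hf)
      have hvlen : (l₁ ++ x :: l₂ ++ x :: l₃).length = es.length + 1 := chains_length hc
      have hlen' : (l₁ ++ x :: l₃).length ≤ N := by
        simp only [List.length_append, List.length_cons] at hlen ⊢
        omega
      have hh' : (l₁ ++ x :: l₃).head? = some a := by
        rw [List.head?_append] at hh ⊢
        simpa using hh
      have hl' : (l₁ ++ x :: l₃).getLast? = some b := by
        rw [getLast?_append_of_ne_nil _ (by simp : (x :: l₃) ≠ [])]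
        rw [show l₁ ++ x :: l₂ ++ x :: l₃ = (l₁ ++ x :: l₂) ++ x :: l₃ by simp,
          getLast?_append_of_ne_nil _ (by simp : (x :: l₃) ≠ [])] at hl
        exact hl
      obtain ⟨vs', es', hp, hh'', hl'', hsub⟩ := ih _ _ hlen' hglue hmem' a b hh' hl'
      refine ⟨vs', es', hp, hh'', hl'', fun f hf => ?_⟩
      rcases List.mem_append.mp (hsub f hf) with hf' | hf'
      · exact (List.take_sublist _ _).subset hf'
      · exact (List.drop_sublist _ _).subset hf'


lemma reach_of_walk {F : Finset (Finset V)} {vs : List V} {es : List (Finset V)}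
    (hc : Chains vs es) (hmem : ∀ e ∈ es, e ∈ F) {a b : V}
    (hh : vs.head? = some a) (hl : vs.getLast? = some b) : Reach F a b := by
  obtain ⟨vs', es', hp, hh', hl', _⟩ :=
    reach_of_walk_aux vs.length vs es le_rfl hc hmem a b hh hl
  exact ⟨vs', es', hp, hh', hl'⟩

lemma reach_refl (F : Finset (Finset V)) (a : V) : Reach F a a :=
  ⟨[a], [], ⟨List.nodup_singleton a, List.nodup_nil, by simp, trivial⟩, rfl, rfl⟩

lemma reach_symm {F : Finset (Finset V)} {a b : V} (h : Reach F a b) : Reach F b a := by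
  obtain ⟨vs, es, ⟨h1, h2, h3, h4⟩, hh, hl⟩ := h
  exact ⟨vs.reverse, es.reverse, ⟨List.nodup_reverse.mpr h1, List.nodup_reverse.mpr h2,
    fun e he => h3 e (List.mem_reverse.mp he), chains_reverse h4⟩,
    by rwa [List.head?_reverse], by rwa [List.getLast?_reverse]⟩

lemma reach_mono {F F' : Finset (Finset V)} (hFF : F ⊆ F') {a b : V} (h : Reach F a b) :
    Reach F' a b := by
  obtain ⟨vs, es, ⟨h1, h2, h3, h4⟩, hh, hl⟩ := h
  exact ⟨vs, es, ⟨h1, h2, fun e he => hFF (h3 e he), h4⟩, hh, hl⟩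

lemma reach_step {F : Finset (Finset V)} {e : Finset V} (he : e ∈ F) {a b : V}
    (ha : a ∈ e) (hb : b ∈ e) : Reach F a b := by
  by_cases hab : a = b
  · exact hab ▸ reach_refl F a
  · exact ⟨[a, b], [e], ⟨by simp [hab], List.nodup_singleton e, by simpa using he,
      ⟨ha, hb, trivial⟩⟩, rfl, by simp⟩

lemma reach_trans {F : Finset (Finset V)} {a b c : V}
    (h₁ : Reach F a b) (h₂ : Reach F b c) : Reach F a c := by
  obtain ⟨vs₁, es₁, ⟨_, _, hm₁, hc₁⟩, hh₁, hl₁⟩ := h₁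
  obtain ⟨vs₂, es₂, ⟨_, _, hm₂, hc₂⟩, hh₂, hl₂⟩ := h₂
  obtain ⟨t, rfl⟩ : ∃ t, vs₂ = b :: t := by
    cases vs₂ with
    | nil => simp at hh₂
    | cons x t => exact ⟨t, by simpa using (by simpa using hh₂ : x = b) ▸ rfl⟩
  have hne₁ : vs₁ ≠ [] := chains_ne_nil hc₁
  obtain ⟨xs, rfl⟩ : ∃ xs, vs₁ = xs ++ [b] := by
    refine ⟨vs₁.dropLast, ?_⟩
    have h1 := List.dropLast_append_getLast hne₁
    have h2 : vs₁.getLast hne₁ = b := by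
      rw [List.getLast?_eq_getLast hne₁] at hl₁; exact Option.some_inj.mp hl₁
    rw [h2] at h1; exact h1.symm
  have hglue := chains_glue hc₁ hc₂
  refine reach_of_walk hglue ?_ ?_ ?_
  · intro f hf
    rcases List.mem_append.mp hf with hf | hf
    · exact hm₁ f hf
    · exact hm₂ f hf
  · rw [List.head?_append] at hh₁ ⊢
    simpa using hh₁
  · rw [getLast?_append_of_ne_nil _ (by simp : (b :: t) ≠ [])]
    exact hl₂

end A


section S
variable {F : Finset (Finset V)}

/-- In a supertree, two distinct vertices of an edge `e` are not joined by any path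
avoiding `e`. -/
lemma not_reach_erase {k : ℕ} {E : Finset (Finset V)} (hT : IsSupertree k E)
    {e : Finset V} (he : e ∈ E) {a b : V} (hab : a ≠ b) (ha : a ∈ e) (hb : b ∈ e) :
    ¬ Reach (E.erase e) a b := by
  rintro ⟨vs, es, ⟨hnd, hed, hmem, hc⟩, hh, hl⟩
  have hes_ne : es ≠ [] := by
    rintro rfl
    cases vs with
    | nil => simp at hh
    | cons x t =>
      cases t with
      | nil =>
        simp only [List.head?_cons, Option.some_inj] at hh
        simp only [List.getLast?_singleton, Option.some_inj] at hl
        exact hab (hh ▸ hl ▸ rfl)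
      | cons y t => have := chains_length hc; simp at this
  apply hT.2.2 vs (es ++ [e])
  refine ⟨?_, hnd, ?_, ?_, ⟨a, hh, ?_⟩⟩
  · have : 1 ≤ es.length := List.length_pos_iff.mpr hes_ne
    simp only [List.length_append, List.length_cons, List.length_nil]
    omega
  · rw [List.nodup_append]
    refine ⟨hed, List.nodup_singleton e, ?_⟩
    intro f hf g hg hfe
    rw [List.mem_singleton] at hg
    subst hg hfe
    exact Finset.notMem_erase f E (hmem f hf)
  · intro f hf
    rcases List.mem_append.mp hf with hf | hf
    · exact Finset.mem_of_mem_erase (hmem f hf)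
    · rw [List.mem_singleton] at hf; exact hf ▸ he
  · exact chains_concat hc hl hb ha

/-- Decompose a walk at the (unique) occurrence of an edge `e`. -/
lemma walk_decomp_at_edge {z : List V} {es : List (Finset V)}
    (hc : Chains z es) (hm : ∀ f ∈ es, f ∈ F) (hnd : es.Nodup)
    {e : Finset V} (he : e ∈ es) {a b : V}
    (hh : z.head? = some a) (hl : z.getLast? = some b) :
    ∃ x y, x ∈ e ∧ y ∈ e ∧ Reach (F.erase e) a x ∧ Reach (F.erase e) y b ∧
      ∃ P Q, z = P ++ x :: y :: Q := by
  obtain ⟨s, t, rfl, hes⟩ := first_occ he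
  have het : e ∉ t := by
    rw [List.nodup_append] at hnd
    exact (List.nodup_cons.mp hnd.2.1).1
  have hzlen : z.length = s.length + t.length + 2 := by
    have := chains_length hc; simp at this; omega
  obtain ⟨aa, rest, hdrop⟩ : ∃ aa rest, z.drop s.length = aa :: rest := by
    cases hd : z.drop s.length with
    | nil =>
      exfalso; have := congrArg List.length hd
      simp only [List.length_drop, List.length_nil] at this; omega
    | cons aa rest => exact ⟨aa, rest, rfl⟩
  have hz₁ : z = z.take s.length ++ aa :: rest := by rw [← hdrop, List.take_append_drop]
  have htklen : (z.take s.length).length = s.length := by rw [List.length_take]; omega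
  have hcA := hc
  rw [hz₁] at hcA
  have hsp := chains_split (xs := z.take s.length) (a := aa) (ys := rest) hcA
  rw [htklen] at hsp
  obtain ⟨h₁, h₂⟩ := hsp
  rw [List.take_left] at h₁
  rw [List.drop_left] at h₂
  obtain ⟨y, rest', hrest⟩ : ∃ y rest', rest = y :: rest' := by
    cases hr : rest with
    | nil => exfalso; rw [hr] at h₂; exact absurd (chains_single h₂) (by simp)
    | cons y rest' => exact ⟨y, rest', rfl⟩
  rw [hrest] at h₂ hz₁
  obtain ⟨e'', es'', heq, haa, hy, h₃⟩ := chains_cons h₂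
  injection heq with he1 he2
  subst he1; subst he2
  have hsub : ∀ f ∈ s, f ∈ F.erase e := by
    intro f hf
    exact Finset.mem_erase.mpr ⟨fun hfe => hes (hfe ▸ hf), hm f (by simp [hf])⟩
  refine ⟨aa, y, haa, hy, ?_, ?_, z.take s.length, rest', hz₁⟩
  · refine reach_of_walk h₁ (fun f hf => hsub f hf) ?_ ?_
    · rw [hz₁] at hh
      rw [List.head?_append] at hh ⊢
      simpa using hh
    · rw [getLast?_append_of_ne_nil _ (by simp : [aa] ≠ [])]
      rfl
  · refine reach_of_walk h₃ ?_ rfl ?_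
    · intro f hf
      exact Finset.mem_erase.mpr ⟨fun hfe => het (hfe ▸ hf), hm f (by simp [hf])⟩
    · rw [hz₁, getLast?_append_of_ne_nil _ (by simp : (aa :: y :: rest') ≠ []),
        List.getLast?_cons_cons] at hl
      exact hl

end S


section Bsec
variable {k : ℕ} {E : Finset (Finset V)}

lemma exists_mem_edge (hT : IsSupertree k E) {u w : V} (huw : u ≠ w) : ∃ e ∈ E, u ∈ e := by
  obtain ⟨vs, es, hp, hh, hl⟩ := hT.2.1 u w
  cases vs with
  | nil => simp at hh
  | cons x t =>
    have hx : x = u := by simpa using hh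
    subst hx
    cases t with
    | nil =>
      exfalso
      simp only [List.getLast?_singleton, Option.some_inj] at hl
      exact huw hl
    | cons y t =>
      obtain ⟨e, es', rfl, hxe, _, _⟩ := chains_cons hp.2.2.2
      exact ⟨e, hp.2.2.1 e (by simp), hxe⟩

lemma degree_pos [Fintype V] (hT : IsSupertree k E) (hn : 2 ≤ Fintype.card V) (u : V) :
    0 < degree E u := by
  obtain ⟨w, hw⟩ := Fintype.exists_ne_of_one_lt_card (by omega) u
  obtain ⟨e, he, hue⟩ := exists_mem_edge hT (Ne.symm hw)
  rw [degree, Finset.card_pos]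
  exact ⟨e, Finset.mem_filter.mpr ⟨he, hue⟩⟩

lemma sum_degree [Fintype V] (E : Finset (Finset V)) :
    ∑ v, degree E v = ∑ e ∈ E, e.card := by
  simp only [degree, Finset.card_filter]
  rw [Finset.sum_comm]
  refine Finset.sum_congr rfl fun e _ => ?_
  rw [← Finset.card_filter]
  congr 1
  ext v
  simp

lemma sum_degree_uniform [Fintype V] (hU : IsUniform k E) :
    ∑ v, degree E v = k * E.card := by
  rw [sum_degree]
  rw [Finset.sum_congr rfl fun e he => hU e he]
  simp [mul_comm]

lemma chains_last_mem {vs : List V} {es : List (Finset V)} (h : Chains vs es)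
    (hne : es ≠ []) {b : V} (hl : vs.getLast? = some b) : ∃ f ∈ es, b ∈ f := by
  have hr := chains_reverse h
  cases hv : vs.reverse with
  | nil => exact absurd (by simpa using congrArg List.reverse hv) (chains_ne_nil h)
  | cons b' t =>
    cases he : es.reverse with
    | nil => exact absurd (by simpa using congrArg List.reverse he) hne
    | cons f es' =>
      rw [hv, he] at hr
      have hb' : b' = b := by
        rw [← List.head?_reverse, hv] at hl
        simpa using hl
      subst hb'
      exact ⟨f, by rw [← List.mem_reverse, he]; simp, chains_head_mem hr⟩

lemma chain_exit {F : Finset (Finset V)} :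
    ∀ {vs : List V} {es : List (Finset V)}, Chains vs es →
      ∀ {x : V}, vs.head? = some x → x ∈ F.sup id →
      (∀ f ∈ es, f ∈ F) ∨ ∃ f, f ∉ F ∧ f ∈ es ∧ ∃ c ∈ f, c ∈ F.sup id := by
  intro vs
  induction vs with
  | nil => intro es h; exact absurd h (chains_nil es)
  | cons a t ih =>
    intro es h x hh hx
    have hax : a = x := by simpa using hh
    subst hax
    cases t with
    | nil => rw [chains_single h]; exact Or.inl (by simp)
    | cons b t' =>
      obtain ⟨e, es', rfl, hae, hbe, h'⟩ := chains_cons h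
      by_cases heF : e ∈ F
      · have hbS : b ∈ F.sup id := Finset.le_sup (f := id) heF hbe
        rcases ih h' rfl hbS with hall | ⟨f, hf1, hf2, hf3⟩
        · left
          intro f hf
          rcases List.mem_cons.mp hf with rfl | hf
          · exact heF
          · exact hall f hf
        · exact Or.inr ⟨f, hf1, by simp [hf2], hf3⟩
      · exact Or.inr ⟨e, heF, by simp, a, hae, hx⟩

lemma supertree_card_aux (hT : IsSupertree k E) (hk : 2 ≤ k) :
    ∀ n (F : Finset (Finset V)), F ⊆ E → F.Nonempty →
      (∀ a ∈ F.sup id, ∀ b ∈ F.sup id, Reach F a b) →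
      (F.sup id).card = (k-1) * F.card + 1 →
      E.card - F.card = n →
      (E.sup id).card = (k-1) * E.card + 1 := by
  intro n
  induction n with
  | zero =>
    intro F hFE hFne hconn hcard hn
    have hcardle : E.card ≤ F.card := by omega
    have : F = E := Finset.eq_of_subset_of_card_le hFE hcardle
    subst this
    exact hcard
  | succ n ih =>
    intro F hFE hFne hconn hcard hn
    have hFlt : F.card < E.card := by omega
    -- find an edge of E \\ F meeting the support
    have hstep : ∃ e ∈ E, e ∉ F ∧ ∃ c ∈ e, c ∈ F.sup id := by
      obtain ⟨f₀, hf₀⟩ := hFne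
      obtain ⟨g, hgE, hgF⟩ : ∃ g ∈ E, g ∉ F := by
        by_contra hcon
        push_neg at hcon
        have : E ⊆ F := fun e he => hcon e he
        have := Finset.card_le_card this
        omega
      have hf₀k : f₀.card = k := hT.1 f₀ (hFE hf₀)
      obtain ⟨x, hx⟩ : f₀.Nonempty := Finset.card_pos.mp (by omega)
      have hgk : g.card = k := hT.1 g hgE
      obtain ⟨y, hy⟩ : g.Nonempty := Finset.card_pos.mp (by omega)
      have hxS : x ∈ F.sup id := Finset.le_sup (f := id) hf₀ hx
      obtain ⟨vs, es, hp, hh, hl⟩ := hT.2.1 x y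
      rcases chain_exit hp.2.2.2 hh hxS with hall | ⟨f, hf1, hf2, hf3⟩
      · -- all path edges in F, so y is in the support; use g
        refine ⟨g, hgE, hgF, y, hy, ?_⟩
        cases hes : es with
        | nil =>
          have hxy : x = y := by
            rw [hes] at hp
            have h1 := hp.2.2.2
            cases vs with
            | nil => simp at hh
            | cons a t =>
              cases t with
              | nil =>
                simp only [List.head?_cons, Option.some_inj] at hh
                simp only [List.getLast?_singleton, Option.some_inj] at hl
                rw [← hh, hl]
              | cons b t' => exact absurd (chains_length h1) (by simp)
          exact hxy ▸ hxS
        | cons f' es' =>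
          obtain ⟨f'', hf''es, hyf''⟩ := chains_last_mem hp.2.2.2 (by rw [hes]; simp) hl
          exact Finset.le_sup (f := id) (hall f'' hf''es) hyf''
      · exact ⟨f, hp.2.2.1 f hf2, hf1, hf3⟩
    obtain ⟨e, heE, heF, c, hce, hcS⟩ := hstep
    -- the intersection with the support is exactly {c}
    have hsingle : ∀ c' ∈ e, c' ∈ F.sup id → c' = c := by
      intro c' hc'e hc'S
      by_contra hne
      have hreach : Reach F c' c := hconn c' hc'S c hcS
      have : Reach (E.erase e) c' c := by
        refine reach_mono ?_ hreach
        intro f hf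
        exact Finset.mem_erase.mpr ⟨fun h => heF (h ▸ hf), hFE hf⟩
      exact not_reach_erase hT heE hne hc'e hce this
    have hinter : e ∩ F.sup id = {c} := by
      ext z
      simp only [Finset.mem_inter, Finset.mem_singleton]
      constructor
      · rintro ⟨h1, h2⟩; exact hsingle z h1 h2
      · rintro rfl; exact ⟨hce, hcS⟩
    set F' := insert e F with hF'
    have hsupF' : F'.sup id = e ∪ F.sup id := by
      rw [hF', Finset.sup_insert]; rfl
    have hcardF' : F'.card = F.card + 1 := Finset.card_insert_of_notMem heF
    have hek : e.card = k := hT.1 e heE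
    have hcard' : (F'.sup id).card = (k-1) * F'.card + 1 := by
      rw [hsupF']
      have h1 := Finset.card_union_add_card_inter e (F.sup id)
      rw [hinter] at h1
      simp only [Finset.card_singleton] at h1
      have hk1 : 1 ≤ (F.sup id).card := Finset.card_pos.mpr ⟨c, hcS⟩
      rw [hcardF']
      have hmul : (k-1)*(F.card+1) = (k-1)*F.card + (k-1) := by ring
      omega
    have hconn' : ∀ a ∈ F'.sup id, ∀ b ∈ F'.sup id, Reach F' a b := by
      have hkey : ∀ a ∈ F'.sup id, Reach F' a c := by
        intro a ha
        rw [hsupF', Finset.mem_union] at ha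
        rcases ha with ha | ha
        · exact reach_step (by simp [hF']) ha hce
        · exact reach_mono (by intro f hf; simp [hF', hf]) (hconn a ha c hcS)
      intro a ha b hb
      exact reach_trans (hkey a ha) (reach_symm (hkey b hb))
    have hF'sub : F' ⊆ E := by
      intro f hf
      rcases Finset.mem_insert.mp hf with rfl | hf
      · exact heE
      · exact hFE hf
    exact ih F' hF'sub ⟨e, Finset.mem_insert_self e F⟩ hconn' hcard' (by rw [hcardF']; omega)

lemma sup_eq_univ [Fintype V] (hT : IsSupertree k E) (hn : 2 ≤ Fintype.card V) :
    E.sup id = Finset.univ := by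
  ext u
  simp only [Finset.mem_univ, iff_true]
  obtain ⟨w, hw⟩ := Fintype.exists_ne_of_one_lt_card (by omega) u
  obtain ⟨e, he, hue⟩ := exists_mem_edge hT (Ne.symm hw)
  exact Finset.le_sup (f := id) he hue

lemma supertree_card [Fintype V] (hT : IsSupertree k E) (hk : 2 ≤ k)
    (hn : 2 ≤ Fintype.card V) :
    Fintype.card V = (k-1) * E.card + 1 := by
  have hEne : E.Nonempty := by
    have hnv : Nonempty V := Fintype.card_pos_iff.mp (by omega)
    obtain ⟨u⟩ := hnv
    obtain ⟨w, hw⟩ := Fintype.exists_ne_of_one_lt_card (by omega) u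
    obtain ⟨e, he, _⟩ := exists_mem_edge hT (Ne.symm hw)
    exact ⟨e, he⟩
  obtain ⟨e₀, he₀⟩ := hEne
  have hek : e₀.card = k := hT.1 e₀ he₀
  have := supertree_card_aux hT hk (E.card - 1) {e₀} (by simpa using he₀) ⟨e₀, by simp⟩
    (by
      intro a ha b hb
      simp only [Finset.sup_singleton, id] at ha hb
      exact reach_step (e := e₀) (F := {e₀}) (by simp) ha hb)
    (by simp [hek]; omega)
    (by simp)
  rw [sup_eq_univ hT hn, Finset.card_univ] at this
  exact this

end Bsec


section Dsec
variable {k : ℕ} {E : Finset (Finset V)}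

/-- There is an edge at `v` avoiding `u` whose branch avoids `u`. -/
lemma exists_good_edge (hT : IsSupertree k E) {u v : V} (huv : u ≠ v)
    (hv : 2 ≤ degree E v) :
    ∃ e ∈ E, v ∈ e ∧ u ∉ e ∧ ∀ x ∈ e, x ≠ v → ¬ Reach (E.erase e) x u := by
  classical
  have hbad : ∀ e₁ ∈ E, ∀ e₂ ∈ E, e₁ ≠ e₂ → v ∈ e₁ → v ∈ e₂ →
      (∃ x ∈ e₁, x ≠ v ∧ Reach (E.erase e₁) x u) →
      (∃ x ∈ e₂, x ≠ v ∧ Reach (E.erase e₂) x u) → False := by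
    intro e₁ he₁ e₂ he₂ hne hv₁ hv₂ ⟨x₁, hx₁e, hx₁v, hr₁⟩ ⟨x₂, hx₂e, hx₂v, hr₂⟩
    obtain ⟨vs, es, hp, hh, hl⟩ := hr₂
    by_cases he₁es : e₁ ∈ es
    · obtain ⟨x, y, hxe, hye, hrx, hry, _, _, _⟩ :=
        walk_decomp_at_edge (F := E.erase e₂) hp.2.2.2 hp.2.2.1 hp.2.1 he₁es hh hl
      have hrx' : Reach (E.erase e₂) x₂ x :=
        reach_mono (Finset.erase_subset _ _) hrx
      have hto_v : Reach (E.erase e₂) x₂ v := by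
        rcases eq_or_ne x v with rfl | hxv
        · exact hrx'
        · refine reach_trans hrx' (reach_step ?_ hxe hv₁)
          exact Finset.mem_erase.mpr ⟨hne, he₁⟩
      exact not_reach_erase hT he₂ hx₂v hx₂e hv₂ hto_v
    · have hr₂' : Reach (E.erase e₁) x₂ u := by
        refine ⟨vs, es, ⟨hp.1, hp.2.1, ?_, hp.2.2.2⟩, hh, hl⟩
        intro f hf
        refine Finset.mem_erase.mpr ⟨fun hfe => he₁es (hfe ▸ hf), ?_⟩
        exact Finset.mem_of_mem_erase (hp.2.2.1 f hf)
      have : Reach (E.erase e₁) x₁ v := by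
        refine reach_trans hr₁ (reach_trans (reach_symm hr₂') ?_)
        exact reach_step (Finset.mem_erase.mpr ⟨Ne.symm hne, he₂⟩) hx₂e hv₂
      exact not_reach_erase hT he₁ hx₁v hx₁e hv₁ this
  -- there are two distinct edges at v
  obtain ⟨e₁, he₁, e₂, he₂, hne⟩ :
      ∃ e₁ ∈ E.filter (fun e => v ∈ e), ∃ e₂ ∈ E.filter (fun e => v ∈ e), e₁ ≠ e₂ :=
    Finset.one_lt_card.mp (by rwa [degree] at hv)
  rw [Finset.mem_filter] at he₁ he₂
  have hnotboth := hbad e₁ he₁.1 e₂ he₂.1 hne he₁.2 he₂.2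
  by_cases hb₁ : ∃ x ∈ e₁, x ≠ v ∧ Reach (E.erase e₁) x u
  · refine ⟨e₂, he₂.1, he₂.2, ?_, ?_⟩
    · intro hue₂
      exact hnotboth hb₁ ⟨u, hue₂, huv, reach_refl _ u⟩
    · intro x hx hxv hr
      exact hnotboth hb₁ ⟨x, hx, hxv, hr⟩
  · push_neg at hb₁
    refine ⟨e₁, he₁.1, he₁.2, ?_, ?_⟩
    · intro hue₁
      exact (hb₁ u hue₁ huv) (reach_refl _ u)
    · intro x hx hxv hr
      exact (hb₁ x hx hxv) hr

lemma adj_ne_of_closed_walk {vs : List V} {w₀ : V} (hnd : vs.Nodup)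
    (hh : vs.head? = some w₀) (hlen : 2 ≤ vs.length) {P Q : List V} {x y : V}
    (hdec : vs ++ [w₀] = P ++ x :: y :: Q) : x ≠ y := by
  rcases List.eq_nil_or_concat Q with rfl | ⟨Q', c, rfl⟩
  · -- vs ++ [w₀] = (P ++ [x]) ++ [y]
    have hdec' : vs ++ [w₀] = (P ++ [x]) ++ [y] := by simpa using hdec
    obtain ⟨h1, h2⟩ := List.append_inj hdec' (by
      have := congrArg List.length hdec'
      simp at this ⊢
      omega)
    have hy : y = w₀ := by simpa using h2.symm
    subst hy
    rintro rfl
    -- vs = P ++ [x] with x = y = w₀ = head of vs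
    cases P with
    | nil => rw [h1] at hlen; simp at hlen
    | cons p P' =>
      rw [h1] at hh hnd
      simp only [List.cons_append, List.head?_cons, Option.some_inj] at hh
      subst hh
      rw [List.nodup_append] at hnd
      exact hnd.2.2 p (by simp) p (by simp) rfl
  · -- vs = P ++ x :: y :: Q'
    have hdec' : vs ++ [w₀] = (P ++ x :: y :: Q') ++ [c] := by simpa using hdec
    obtain ⟨h1, _⟩ := List.append_inj hdec' (by
      have := congrArg List.length hdec'
      simp at this ⊢
      omega)
    have hinf : [x, y] <:+: vs := ⟨P, Q', by simp [h1]⟩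
    have : ([x, y] : List V).Nodup := hnd.sublist hinf.sublist
    rw [List.nodup_cons] at this
    exact fun hxy => this.1 (by simp [hxy])

/-- Moving a good edge from `v` to `u` yields a supertree with controlled degrees. -/
lemma move_edge (hT : IsSupertree k E) (hk : 2 ≤ k) {u v : V} (huv : u ≠ v)
    {e : Finset V} (heE : e ∈ E) (hve : v ∈ e) (hue : u ∉ e)
    (hgood : ∀ x ∈ e, x ≠ v → ¬ Reach (E.erase e) x u)
    {e' : Finset V} {E' : Finset (Finset V)}
    (he'def : e' = insert u (e.erase v)) (hE'def : E' = insert e' (E.erase e)) :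
    IsSupertree k E' ∧ e' ∉ E ∧ E'.card = E.card ∧
    degree E' u = degree E u + 1 ∧ degree E' v + 1 = degree E v ∧
    ∀ w, w ≠ u → w ≠ v → degree E' w = degree E w := by
  classical
  have hek : e.card = k := hT.1 e heE
  have herase_card : (e.erase v).card = k - 1 := by
    rw [Finset.card_erase_of_mem hve, hek]
  have he'card : e'.card = k := by
    rw [he'def, Finset.card_insert_of_notMem (fun h => hue (Finset.mem_of_mem_erase h)),
      herase_card]
    omega
  have hne_erase : (e.erase v).Nonempty := Finset.card_pos.mp (by omega)
  have hue' : u ∈ e' := by rw [he'def]; exact Finset.mem_insert_self u _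
  have hve' : v ∉ e' := by
    rw [he'def]
    simp [Ne.symm huv]
  have he'mem : ∀ x, x ∈ e' ↔ (x = u ∨ (x ∈ e ∧ x ≠ v)) := by
    intro x
    rw [he'def]
    simp only [Finset.mem_insert, Finset.mem_erase]
    tauto
  have he'nE : e' ∉ E := by
    intro he'E
    obtain ⟨x, hx⟩ := hne_erase
    have hxe' : x ∈ e' := by rw [he'def]; exact Finset.mem_insert_of_mem hx
    have he'ne : e' ≠ e := fun h => hve' (h ▸ hve)
    have : Reach (E.erase e) x u :=
      reach_step (Finset.mem_erase.mpr ⟨he'ne, he'E⟩) hxe' hue'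
    exact hgood x (Finset.mem_of_mem_erase hx) (Finset.mem_erase.mp hx).1 this
  have he'nEe : e' ∉ E.erase e := fun h => he'nE (Finset.mem_of_mem_erase h)
  have hcard' : E'.card = E.card := by
    rw [hE'def, Finset.card_insert_of_notMem he'nEe, Finset.card_erase_of_mem heE]
    have : 1 ≤ E.card := Finset.card_pos.mpr ⟨e, heE⟩
    omega
  have hErE' : E.erase e ⊆ E' := by rw [hE'def]; exact Finset.subset_insert _ _
  have he'E' : e' ∈ E' := by rw [hE'def]; exact Finset.mem_insert_self _ _
  -- the path from u to v in E avoids e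
  have huv_reach : Reach (E.erase e) u v := by
    obtain ⟨vs, es, hp, hh, hl⟩ := hT.2.1 u v
    by_cases he_es : e ∈ es
    · obtain ⟨x, y, hxe, hye, hrx, hry, _, _, _⟩ :=
        walk_decomp_at_edge (F := E) hp.2.2.2 hp.2.2.1 hp.2.1 he_es hh hl
      rcases eq_or_ne x v with rfl | hxv
      · exact hrx
      · exact absurd (reach_symm hrx) (hgood x hxe hxv)
    · exact ⟨vs, es, ⟨hp.1, hp.2.1, fun f hf => Finset.mem_erase.mpr
        ⟨fun hfe => he_es (hfe ▸ hf), hp.2.2.1 f hf⟩, hp.2.2.2⟩, hh, hl⟩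
  have hu'v : Reach E' u v := reach_mono hErE' huv_reach
  -- connectivity of E'
  have hkey : ∀ w, Reach E' w v := by
    intro w
    obtain ⟨vs, es, hp, hh, hl⟩ := hT.2.1 w v
    by_cases he_es : e ∈ es
    · obtain ⟨x, y, hxe, hye, hrx, hry, _, _, _⟩ :=
        walk_decomp_at_edge (F := E) hp.2.2.2 hp.2.2.1 hp.2.1 he_es hh hl
      have hrx' : Reach E' w x := reach_mono hErE' hrx
      have hry' : Reach E' y v := reach_mono hErE' hry
      rcases eq_or_ne x v with rfl | hxv
      · exact hrx'
      · have hxe' : x ∈ e' := (he'mem x).mpr (Or.inr ⟨hxe, hxv⟩)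
        rcases eq_or_ne y v with rfl | hyv
        · have hxu : Reach E' x u := reach_step he'E' hxe' hue'
          exact reach_trans hrx' (reach_trans hxu hu'v)
        · have hye' : y ∈ e' := (he'mem y).mpr (Or.inr ⟨hye, hyv⟩)
          have hxy : Reach E' x y := reach_step he'E' hxe' hye'
          exact reach_trans hrx' (reach_trans hxy hry')
    · refine reach_mono hErE' ⟨vs, es, ⟨hp.1, hp.2.1, fun f hf => Finset.mem_erase.mpr
        ⟨fun hfe => he_es (hfe ▸ hf), hp.2.2.1 f hf⟩, hp.2.2.2⟩, hh, hl⟩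
  have hconn' : HConnected E' := by
    intro a b
    exact reach_trans (hkey a) (reach_symm (hkey b))
  -- uniformity
  have hunif' : IsUniform k E' := by
    intro f hf
    rw [hE'def] at hf
    rcases Finset.mem_insert.mp hf with rfl | hf
    · exact he'card
    · exact hT.1 f (Finset.mem_of_mem_erase hf)
  -- acyclicity
  have hacyc' : ∀ vs es, ¬ IsCycle E' vs es := by
    intro vs es hcyc
    obtain ⟨hlen2, hvnd, hend, hmem, w₀, hw₀, hchain⟩ := hcyc
    by_cases he'es : e' ∈ es
    · have hz_h : (vs ++ [w₀]).head? = some w₀ := by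
        cases vs with
        | nil => simp at hw₀
        | cons p t => simpa using hw₀
      have hz_l : (vs ++ [w₀]).getLast? = some w₀ := by
        rw [getLast?_append_of_ne_nil _ (by simp : [w₀] ≠ [])]; rfl
      obtain ⟨x, y, hxe, hye, hrx, hry, P, Q, hdec⟩ :=
        walk_decomp_at_edge (F := E') hchain hmem hend he'es hz_h hz_l
      have hEE : E'.erase e' = E.erase e := by
        rw [hE'def, Finset.erase_insert he'nEe]
      rw [hEE] at hrx hry
      have hyx : Reach (E.erase e) y x := reach_trans hry hrx
      have hvs_len : 2 ≤ vs.length := by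
        have := chains_length hchain
        simp only [List.length_append, List.length_singleton] at this
        omega
      have hxy : x ≠ y := adj_ne_of_closed_walk hvnd hw₀ hvs_len hdec
      rcases (he'mem x).mp hxe with rfl | ⟨hxe2, hxv⟩
      · rcases (he'mem y).mp hye with rfl | ⟨hye2, hyv⟩
        · exact hxy rfl
        · exact hgood y hye2 hyv (reach_symm (reach_symm hyx))
      · rcases (he'mem y).mp hye with rfl | ⟨hye2, hyv⟩
        · exact hgood x hxe2 hxv (reach_symm hyx)
        · exact not_reach_erase hT heE (Ne.symm hxy) hye2 hxe2 hyx
    · refine hT.2.2 vs es ⟨hlen2, hvnd, hend, ?_, w₀, hw₀, hchain⟩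
      intro f hf
      have := hmem f hf
      rw [hE'def] at this
      rcases Finset.mem_insert.mp this with rfl | hf'
      · exact absurd hf he'es
      · exact Finset.mem_of_mem_erase hf'
  -- degrees
  have hdeg_erase : ∀ w, degree (E.erase e) w + (if w ∈ e then 1 else 0) = degree E w := by
    intro w
    simp only [degree]
    rw [Finset.filter_erase]
    by_cases hw : w ∈ e
    · rw [if_pos hw, Finset.card_erase_of_mem (Finset.mem_filter.mpr ⟨heE, hw⟩)]
      have : 1 ≤ (E.filter (fun f => w ∈ f)).card :=
        Finset.card_pos.mpr ⟨e, Finset.mem_filter.mpr ⟨heE, hw⟩⟩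
      omega
    · rw [if_neg hw, Finset.erase_eq_of_notMem (by simp [hw])]
      omega
  have hdeg' : ∀ w, degree E' w = (if w ∈ e' then 1 else 0) + degree (E.erase e) w := by
    intro w
    rw [hE'def, degree, Finset.filter_insert]
    by_cases hw : w ∈ e'
    · rw [if_pos hw, if_pos hw,
        Finset.card_insert_of_notMem (fun h => he'nEe (Finset.mem_filter.mp h).1)]
      rw [degree]
      omega
    · rw [if_neg hw, if_neg hw, degree]
      omega
  refine ⟨⟨hunif', hconn', hacyc'⟩, he'nE, hcard', ?_, ?_, ?_⟩
  · have h1 := hdeg' u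
    have h2 := hdeg_erase u
    rw [if_pos hue'] at h1
    rw [if_neg hue] at h2
    omega
  · have h1 := hdeg' v
    have h2 := hdeg_erase v
    rw [if_neg hve'] at h1
    rw [if_pos hve] at h2
    omega
  · intro w hwu hwv
    have h1 := hdeg' w
    have h2 := hdeg_erase w
    have : w ∈ e' ↔ w ∈ e := by
      rw [he'mem w]
      constructor
      · rintro (rfl | ⟨h, _⟩)
        · exact absurd rfl hwu
        · exact h
      · intro h; exact Or.inr ⟨h, hwv⟩
    by_cases hw : w ∈ e
    · rw [if_pos (this.mpr hw)] at h1
      rw [if_pos hw] at h2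
      omega
    · rw [if_neg (fun h => hw (this.mp h))] at h1
      rw [if_neg hw] at h2
      omega

end Dsec


section Esec
variable [Fintype V] {k : ℕ} {E : Finset (Finset V)}

/-- The constraint set for the variational characterization. -/
def Kset (V : Type*) [Fintype V] (k : ℕ) : Set (V → ℝ) :=
  {x | (∀ v, 0 ≤ x v) ∧ ∑ v, x v ^ k = 1}

lemma qform_continuous (k : ℕ) (E : Finset (Finset V)) : Continuous (qform k E) := by
  unfold qform
  apply continuous_finset_sum
  intro e _
  apply Continuous.add
  · exact continuous_finset_sum _ (fun i _ => (continuous_apply i).pow k)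
  · exact continuous_const.mul (continuous_finset_prod _ (fun i _ => continuous_apply i))

lemma Kset_compact (hk : 1 ≤ k) : IsCompact (Kset V k) := by
  have hclosed : IsClosed (Kset V k) := by
    have h1 : IsClosed {x : V → ℝ | ∀ v, 0 ≤ x v} := by
      have : {x : V → ℝ | ∀ v, 0 ≤ x v} = ⋂ v, {x : V → ℝ | 0 ≤ x v} := by
        ext x; simp
      rw [this]
      exact isClosed_iInter (fun v => isClosed_le continuous_const (continuous_apply v))
    have h2 : IsClosed {x : V → ℝ | ∑ v, x v ^ k = 1} :=
      isClosed_eq (continuous_finset_sum _ (fun i _ => (continuous_apply i).pow k))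
        continuous_const
    exact (h1.inter h2 : IsClosed ({x : V → ℝ | ∀ v, 0 ≤ x v} ∩ _))
  have hsub : Kset V k ⊆ Set.univ.pi (fun _ : V => Set.Icc (0:ℝ) 1) := by
    rintro x ⟨hx0, hx1⟩ v _
    refine ⟨hx0 v, ?_⟩
    have hle : x v ^ k ≤ 1 := by
      rw [← hx1]
      exact Finset.single_le_sum (fun i _ => pow_nonneg (hx0 i) k) (Finset.mem_univ v)
    exact (pow_le_one_iff_of_nonneg (hx0 v) (by omega)).mp hle
  exact (isCompact_univ_pi (fun _ => isCompact_Icc)).of_isClosed_subset hclosed hsub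

lemma qform_nonneg {x : V → ℝ} (hx : ∀ v, 0 ≤ x v) : 0 ≤ qform k E x := by
  refine Finset.sum_nonneg fun e _ => add_nonneg ?_ ?_
  · exact Finset.sum_nonneg fun i _ => pow_nonneg (hx i) k
  · exact mul_nonneg (by positivity) (Finset.prod_nonneg fun i _ => hx i)

lemma exists_maximizer [Nonempty V] (hk : 1 ≤ k) (E : Finset (Finset V)) :
    ∃ x : V → ℝ, x ∈ Kset V k ∧ qrad k E = qform k E x ∧
      ∀ y ∈ Kset V k, qform k E y ≤ qform k E x := by
  have hne : (Kset V k).Nonempty := by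
    obtain ⟨v₀⟩ := (inferInstance : Nonempty V)
    refine ⟨fun w => if w = v₀ then 1 else 0, fun v => by positivity, ?_⟩
    rw [Finset.sum_congr rfl (fun v _ => by
      rw [show ((if v = v₀ then (1:ℝ) else 0) ^ k) = if v = v₀ then 1 else 0 by
        split <;> simp [zero_pow (by omega : k ≠ 0)]])]
    simp
  obtain ⟨x, hxK, hmax⟩ := (Kset_compact hk).exists_isMaxOn hne
    (qform_continuous k E).continuousOn
  refine ⟨x, hxK, ?_, fun y hy => hmax hy⟩
  have hSeq : {r | ∃ x : V → ℝ, (∀ v, 0 ≤ x v) ∧ (∑ v, x v ^ k) = 1 ∧ r = qform k E x}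
      = qform k E '' Kset V k := by
    ext r
    constructor
    · rintro ⟨z, h1, h2, rfl⟩; exact ⟨z, ⟨h1, h2⟩, rfl⟩
    · rintro ⟨z, ⟨h1, h2⟩, rfl⟩; exact ⟨z, h1, h2, rfl⟩
  rw [qrad, hSeq]
  exact IsGreatest.csSup_eq ⟨⟨x, hxK, rfl⟩, by rintro r ⟨y, hyK, rfl⟩; exact hmax hyK⟩

lemma qform_smul (hU : IsUniform k E) (c : ℝ) (x : V → ℝ) :
    qform k E (fun v => c * x v) = c ^ k * qform k E x := by
  unfold qform
  rw [Finset.mul_sum]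
  refine Finset.sum_congr rfl fun e he => ?_
  rw [mul_add, Finset.mul_sum]
  congr 1
  · exact Finset.sum_congr rfl fun i _ => by ring
  · rw [Finset.prod_mul_distrib, Finset.prod_const, hU e he]
    ring

lemma qform_le_qrad [Nonempty V] (hU : IsUniform k E) (hk : 1 ≤ k) {y : V → ℝ}
    (hy0 : ∀ v, 0 ≤ y v) (hysum : 0 < ∑ v, y v ^ k) :
    qform k E y ≤ qrad k E * ∑ v, y v ^ k := by
  set t := ∑ v, y v ^ k with ht
  set c : ℝ := t ^ (-(1:ℝ)/k) with hc
  have hcpos : 0 < c := Real.rpow_pos_of_pos hysum _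
  have hk0 : (k:ℝ) ≠ 0 := by
    have : (0:ℝ) < k := by exact_mod_cast (by omega : 0 < k)
    exact this.ne'
  have hck : c ^ k * t = 1 := by
    rw [hc, ← Real.rpow_natCast (t ^ (-(1:ℝ)/k)) k, ← Real.rpow_mul hysum.le]
    rw [show (-(1:ℝ)/k * k) = -1 by field_simp]
    rw [Real.rpow_neg_one]
    exact inv_mul_cancel₀ hysum.ne'
  have hzK : (fun v => c * y v) ∈ Kset V k := by
    refine ⟨fun v => mul_nonneg hcpos.le (hy0 v), ?_⟩
    have : ∀ v, (c * y v) ^ k = c ^ k * y v ^ k := fun v => mul_pow c (y v) k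
    rw [Finset.sum_congr rfl (fun v _ => this v), ← Finset.mul_sum, ← ht, hck]
  obtain ⟨xs, hxK, heq, hmax⟩ := exists_maximizer (V := V) hk E
  have h1 : qform k E (fun v => c * y v) ≤ qrad k E := heq ▸ hmax _ hzK
  rw [qform_smul hU] at h1
  have h2 : qform k E y = (c ^ k * qform k E y) * t := by
    rw [mul_comm (c ^ k), mul_assoc, hck, mul_one]
  rw [h2]
  exact mul_le_mul_of_nonneg_right h1 hysum.le

end Esec


section Fsec
variable [Fintype V] {k : ℕ} {E : Finset (Finset V)}

lemma chain_zero_pos {x : V → ℝ} (hx : ∀ v, 0 ≤ x v) :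
    ∀ {vs : List V} {es : List (Finset V)}, Chains vs es → (∀ f ∈ es, f ∈ E) →
      ∀ {a b : V}, vs.head? = some a → vs.getLast? = some b → x a = 0 → 0 < x b →
      ∃ e ∈ E, (∃ i ∈ e, x i = 0) ∧ ∃ j ∈ e, 0 < x j := by
  intro vs
  induction vs with
  | nil => intro es h; exact absurd h (chains_nil es)
  | cons p t ih =>
    intro es h hm a b hh hl ha hb
    have hpa : p = a := by simpa using hh
    subst hpa
    cases t with
    | nil =>
      exfalso
      have : p = b := by simpa using hl
      rw [this] at ha
      rw [ha] at hb
      exact lt_irrefl 0 hb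
    | cons q t' =>
      obtain ⟨e, es', rfl, hpe, hqe, h'⟩ := chains_cons h
      by_cases hq : 0 < x q
      · exact ⟨e, hm e (by simp), ⟨p, hpe, ha⟩, ⟨q, hqe, hq⟩⟩
      · have hq0 : x q = 0 := le_antisymm (not_lt.mp hq) (hx q)
        refine ih h' (fun f hf => hm f (by simp [hf])) rfl ?_ hq0 hb
        rw [← List.getLast?_cons_cons (a := p)]
        exact hl

lemma maximizer_pos [Nonempty V] (hT : IsSupertree k E) (hk : 2 ≤ k)
    {x : V → ℝ} (hxK : x ∈ Kset V k) (hqr : qrad k E = qform k E x)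
    (hmax : ∀ y ∈ Kset V k, qform k E y ≤ qform k E x) :
    ∀ v, 0 < x v := by
  classical
  obtain ⟨hx0, hx1⟩ := hxK
  by_contra hcon
  push_neg at hcon
  obtain ⟨w, hw⟩ := hcon
  have hw0 : x w = 0 := le_antisymm hw (hx0 w)
  obtain ⟨p, hp⟩ : ∃ p, 0 < x p := by
    by_contra hc
    push_neg at hc
    have hzero : ∑ v, x v ^ k = 0 := Finset.sum_eq_zero fun v _ => by
      have hv : x v = 0 := le_antisymm (hc v) (hx0 v)
      simp [hv, zero_pow (by omega : k ≠ 0)]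
    rw [hx1] at hzero
    norm_num at hzero
  obtain ⟨vs, es, hpath, hh, hl⟩ := hT.2.1 w p
  obtain ⟨e₀, he₀E, ⟨i₀, hi₀e, hi₀⟩, j₀, hj₀e, hj₀⟩ :=
    chain_zero_pos hx0 hpath.2.2.2 hpath.2.2.1 hh hl hw0 hp
  set Z := Finset.univ.filter (fun v : V => x v = 0) with hZdef
  set j := (e₀.filter (fun i => x i = 0)).card with hjdef
  set P₀ := ∏ i ∈ e₀.filter (fun i => ¬ x i = 0), x i with hP₀def
  have hP₀pos : 0 < P₀ := by
    refine Finset.prod_pos fun i hi => ?_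
    have := (Finset.mem_filter.mp hi).2
    exact lt_of_le_of_ne (hx0 i) (Ne.symm this)
  have hj1 : 1 ≤ j := Finset.card_pos.mpr ⟨i₀, Finset.mem_filter.mpr ⟨hi₀e, hi₀⟩⟩
  have hjk : j + 1 ≤ k := by
    have hsplit := Finset.card_filter_add_card_filter_not
      (s := e₀) (p := fun i => x i = 0)
    have h2 : 1 ≤ (e₀.filter (fun i => ¬ x i = 0)).card :=
      Finset.card_pos.mpr ⟨j₀, Finset.mem_filter.mpr ⟨hj₀e, hj₀.ne'⟩⟩
    have hek : e₀.card = k := hT.1 e₀ he₀E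
    omega
  have hqrad0 : 0 ≤ qrad k E := hqr ▸ qform_nonneg hx0
  -- choose s
  set s : ℝ := min 1 ((k * P₀) / (qrad k E * Z.card + 1)) with hsdef
  have hspos : 0 < s := by
    refine lt_min one_pos (div_pos ?_ ?_)
    · have : (0:ℝ) < k := by exact_mod_cast (by omega : 0 < k)
      positivity
    · positivity
  have hs1 : s ≤ 1 := min_le_left _ _
  have hs2 : s ≤ (k * P₀) / (qrad k E * Z.card + 1) := min_le_right _ _
  -- perturbed vector
  set y : V → ℝ := fun v => if x v = 0 then s else x v with hydef
  have hy0 : ∀ v, 0 ≤ y v := by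
    intro v
    by_cases hxv : x v = 0 <;> simp [hydef, hxv, hspos.le, hx0 v]
  have hyx : ∀ v, x v ≤ y v := by
    intro v
    by_cases hxv : x v = 0 <;> simp [hydef, hxv, hspos.le]
  -- sum of y^k
  have hysum : ∑ v, y v ^ k = 1 + Z.card * s ^ k := by
    rw [← Finset.sum_filter_add_sum_filter_not Finset.univ (fun v => x v = 0)]
    have hA : ∀ v ∈ Finset.univ.filter (fun v : V => x v = 0), y v ^ k = s ^ k := by
      intro v hv
      simp [hydef, (Finset.mem_filter.mp hv).2]
    have hB : ∀ v ∈ Finset.univ.filter (fun v : V => ¬ x v = 0), y v ^ k = x v ^ k := by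
      intro v hv
      simp [hydef, (Finset.mem_filter.mp hv).2]
    rw [Finset.sum_congr rfl hA, Finset.sum_congr rfl hB, Finset.sum_const, ← hZdef]
    have hx1' : ∑ v ∈ Finset.univ.filter (fun v : V => ¬ x v = 0), x v ^ k = 1 := by
      rw [← hx1, ← Finset.sum_filter_add_sum_filter_not Finset.univ (fun v => x v = 0)]
      have : ∑ v ∈ Finset.univ.filter (fun v : V => x v = 0), x v ^ k = 0 :=
        Finset.sum_eq_zero fun v hv => by
          simp [(Finset.mem_filter.mp hv).2, zero_pow (by omega : k ≠ 0)]
      rw [this, zero_add]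
    rw [hx1']
    push_cast
    ring
  have hysumpos : (0:ℝ) < 1 + Z.card * s ^ k := by positivity
  -- lower bound for qform y
  have hterm_mono : ∀ e ∈ E, (∑ i ∈ e, x i ^ k) + k * ∏ i ∈ e, x i ≤
      (∑ i ∈ e, y i ^ k) + k * ∏ i ∈ e, y i := by
    intro e _
    have h1 : ∑ i ∈ e, x i ^ k ≤ ∑ i ∈ e, y i ^ k :=
      Finset.sum_le_sum fun i _ => pow_le_pow_left₀ (hx0 i) (hyx i) k
    have h2 : ∏ i ∈ e, x i ≤ ∏ i ∈ e, y i :=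
      Finset.prod_le_prod (fun i _ => hx0 i) (fun i _ => hyx i)
    have hk0' : (0:ℝ) ≤ k := by positivity
    linarith [mul_le_mul_of_nonneg_left h2 hk0']
  have hprod_e₀ : ∏ i ∈ e₀, y i = s ^ j * P₀ := by
    rw [← Finset.prod_filter_mul_prod_filter_not e₀ (fun i => x i = 0)]
    have hA : ∀ i ∈ e₀.filter (fun i => x i = 0), y i = s := by
      intro i hi
      simp [hydef, (Finset.mem_filter.mp hi).2]
    have hB : ∀ i ∈ e₀.filter (fun i => ¬ x i = 0), y i = x i := by
      intro i hi
      simp [hydef, (Finset.mem_filter.mp hi).2]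
    rw [Finset.prod_congr rfl hA, Finset.prod_congr rfl hB, Finset.prod_const]
  have hgain : qform k E x + k * s ^ j * P₀ ≤ qform k E y := by
    unfold qform
    rw [← Finset.sum_erase_add E _ he₀E, ← Finset.sum_erase_add E
      (fun e => (∑ i ∈ e, y i ^ k) + k * ∏ i ∈ e, y i) he₀E]
    have h1 : ∑ e ∈ E.erase e₀, ((∑ i ∈ e, x i ^ k) + k * ∏ i ∈ e, x i) ≤
        ∑ e ∈ E.erase e₀, ((∑ i ∈ e, y i ^ k) + k * ∏ i ∈ e, y i) :=
      Finset.sum_le_sum fun e he => hterm_mono e (Finset.mem_of_mem_erase he)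
    have h2 : ((∑ i ∈ e₀, x i ^ k) + k * ∏ i ∈ e₀, x i) + k * s ^ j * P₀ ≤
        (∑ i ∈ e₀, y i ^ k) + k * ∏ i ∈ e₀, y i := by
      rw [Finset.prod_eq_zero hi₀e hi₀, hprod_e₀]
      have h3 : ∑ i ∈ e₀, x i ^ k ≤ ∑ i ∈ e₀, y i ^ k :=
        Finset.sum_le_sum fun i _ => pow_le_pow_left₀ (hx0 i) (hyx i) k
      have : k * (s ^ j * P₀) = k * s ^ j * P₀ := by ring
      linarith
    linarith
  -- upper bound from qrad
  have hupper : qform k E y ≤ qrad k E * (1 + Z.card * s ^ k) := by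
    have := qform_le_qrad (V := V) hT.1 (by omega) hy0 (by rw [hysum]; exact hysumpos)
    rwa [hysum] at this
  -- derive contradiction
  have hfinal : qrad k E * Z.card * s ^ k < k * s ^ j * P₀ := by
    have hsk : s ^ k ≤ s ^ j * s := by
      calc s ^ k ≤ s ^ (j + 1) := by
            apply pow_le_pow_of_le_one hspos.le hs1
            omega
        _ = s ^ j * s := by ring
    have hstep : qrad k E * Z.card * s ≤ qrad k E * Z.card *
        ((k * P₀) / (qrad k E * Z.card + 1)) := by
      apply mul_le_mul_of_nonneg_left hs2
      positivity
    have hlt : qrad k E * Z.card * ((k * P₀) / (qrad k E * Z.card + 1)) < k * P₀ := by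
      rw [div_eq_mul_inv, ← mul_assoc]
      rw [show qrad k E * ↑Z.card * (↑k * P₀) * (qrad k E * ↑Z.card + 1)⁻¹ =
        (↑k * P₀) * ((qrad k E * ↑Z.card) * (qrad k E * ↑Z.card + 1)⁻¹) by ring]
      have hkP : (0:ℝ) < k * P₀ := by
        have : (0:ℝ) < k := by exact_mod_cast (by omega : 0 < k)
        positivity
      have hfrac : (qrad k E * ↑Z.card) * (qrad k E * ↑Z.card + 1)⁻¹ < 1 := by
        rw [← div_eq_mul_inv]
        rw [div_lt_one (by positivity)]
        linarith
      calc (↑k * P₀) * ((qrad k E * ↑Z.card) * (qrad k E * ↑Z.card + 1)⁻¹)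
          < (↑k * P₀) * 1 := by
            apply mul_lt_mul_of_pos_left hfrac hkP
        _ = ↑k * P₀ := mul_one _
    calc qrad k E * ↑Z.card * s ^ k ≤ qrad k E * ↑Z.card * (s ^ j * s) := by
          apply mul_le_mul_of_nonneg_left hsk
          positivity
      _ = (qrad k E * ↑Z.card * s) * s ^ j := by ring
      _ ≤ (qrad k E * ↑Z.card * ((k * P₀) / (qrad k E * Z.card + 1))) * s ^ j := by
          apply mul_le_mul_of_nonneg_right hstep
          positivity
      _ < (k * P₀) * s ^ j := by
          apply mul_lt_mul_of_pos_right hlt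
          positivity
      _ = k * s ^ j * P₀ := by ring
  have : qform k E x + k * s ^ j * P₀ ≤ qform k E x + qrad k E * Z.card * s ^ k := by
    have := hgain.trans hupper
    rw [hqr] at this ⊢
    nlinarith [this]
  linarith
end Fsec


section Gsec
variable [Fintype V] {k : ℕ} {E : Finset (Finset V)}

lemma spectral_move_contra [Nonempty V] (hT : IsSupertree k E) (hk : 2 ≤ k)
    {x : V → ℝ} (hxK : x ∈ Kset V k) (hqr : qrad k E = qform k E x)
    (hpos : ∀ w, 0 < x w)
    {u v : V} (huv : u ≠ v) (hdu : 3 ≤ degree E u) (hdv : 3 ≤ degree E v)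
    (hxvu : x v ≤ x u)
    (hmax : ∀ E'' : Finset (Finset V), IsSupertree k E'' →
      pendentCount E'' = pendentCount E → qrad k E'' ≤ qrad k E) : False := by
  classical
  obtain ⟨e, heE, hve, hue, hgood⟩ := exists_good_edge hT huv (by omega)
  set e' : Finset V := insert u (e.erase v) with he'def
  set E' : Finset (Finset V) := insert e' (E.erase e) with hE'def
  obtain ⟨hT', he'nE, hcard', hdegu, hdegv, hdegw⟩ :=
    move_edge hT hk huv heE hve hue hgood he'def hE'def
  have hpend : pendentCount E' = pendentCount E := by
    unfold pendentCount
    apply congrArg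
    apply Finset.filter_congr
    intro w _
    by_cases hwu : w = u
    · subst hwu; constructor <;> intro h <;> omega
    · by_cases hwv : w = v
      · subst hwv; constructor <;> intro h <;> omega
      · rw [hdegw w hwu hwv]
  have hqle := hmax E' hT' hpend
  have he'nEe : e' ∉ E.erase e := fun h => he'nE (Finset.mem_of_mem_erase h)
  set P : ℝ := ∏ i ∈ e.erase v, x i with hPdef
  have hPpos : 0 < P := Finset.prod_pos fun i _ => hpos i
  have hvne' : v ∉ e.erase v := Finset.notMem_erase v e
  have hune' : u ∉ e.erase v := fun h => hue (Finset.mem_of_mem_erase h)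
  have hkpos : (0:ℝ) < k := by exact_mod_cast (by omega : 0 < k)
  have hqdiff : ∀ y : V → ℝ, (∀ i ∈ e.erase v, y i = x i) →
      qform k E' y = qform k E y + ((y u ^ k - y v ^ k) + k * (y u - y v) * P) := by
    intro y hyx
    have h1 : qform k E' y = ((∑ i ∈ e', y i ^ k) + k * ∏ i ∈ e', y i)
        + ∑ f ∈ E.erase e, ((∑ i ∈ f, y i ^ k) + k * ∏ i ∈ f, y i) := by
      rw [hE'def]
      unfold qform
      rw [Finset.sum_insert he'nEe]
    have h2 : qform k E y = ((∑ i ∈ e, y i ^ k) + k * ∏ i ∈ e, y i)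
        + ∑ f ∈ E.erase e, ((∑ i ∈ f, y i ^ k) + k * ∏ i ∈ f, y i) := by
      unfold qform
      rw [← Finset.add_sum_erase E _ heE]
    have hsum' : ∑ i ∈ e', y i ^ k = y u ^ k + ∑ i ∈ e.erase v, y i ^ k := by
      rw [he'def, Finset.sum_insert hune']
    have hsum : ∑ i ∈ e, y i ^ k = y v ^ k + ∑ i ∈ e.erase v, y i ^ k :=
      (Finset.add_sum_erase e (fun i => y i ^ k) hve).symm
    have hprod' : ∏ i ∈ e', y i = y u * P := by
      rw [he'def, Finset.prod_insert hune', hPdef, Finset.prod_congr rfl hyx]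
    have hprod : ∏ i ∈ e, y i = y v * P := by
      rw [← Finset.mul_prod_erase e y hve, hPdef, Finset.prod_congr rfl hyx]
    rw [h1, h2, hsum', hsum, hprod', hprod]
    ring
  rcases lt_or_eq_of_le hxvu with hlt | heqvu
  · -- strict inequality case
    have h1 := hqdiff x (fun _ _ => rfl)
    have hx_gain : 0 < (x u ^ k - x v ^ k) + (k:ℝ) * (x u - x v) * P := by
      have h2 : x v ^ k < x u ^ k := pow_lt_pow_left₀ hlt (hpos v).le (by omega)
      have h4 : 0 < x u - x v := sub_pos.mpr hlt
      have h3 : 0 < (k:ℝ) * (x u - x v) * P := by positivity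
      linarith
    have hup : qform k E' x ≤ qrad k E' := by
      have := qform_le_qrad (V := V) hT'.1 (by omega : 1 ≤ k) hxK.1
        (by rw [hxK.2]; norm_num)
      rwa [hxK.2, mul_one] at this
    rw [h1, ← hqr] at hup
    linarith
  · -- equal case: derivative argument
    set τ : ℝ := x u with hτdef
    have hτpos : 0 < τ := hpos u
    set c : V → ℝ := fun w => if w = u then 1 else if w = v then -1 else 0 with hcdef
    set y : ℝ → V → ℝ := fun t w => x w + t * c w with hydef2
    have hyu : ∀ t, y t u = τ + t := by
      intro t; simp [hydef2, hcdef, hτdef]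
    have hyv : ∀ t, y t v = τ - t := by
      intro t; simp [hydef2, hcdef, Ne.symm huv, heqvu, hτdef]; ring
    have hyw : ∀ w, w ≠ u → w ≠ v → ∀ t, y t w = x w := by
      intro w hwu hwv t; simp [hydef2, hcdef, hwu, hwv]
    have hy0 : y 0 = x := by funext w; simp [hydef2]
    set g : ℝ → ℝ := fun t => qform k E (y t) with hgdef
    set h : ℝ → ℝ := fun t => ∑ w, y t w ^ k with hhdef
    set Df : ℝ → ℝ := fun t => ((τ + t) ^ k - (τ - t) ^ k)
      + k * ((τ + t) - (τ - t)) * P with hDfdef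
    have hg0 : g 0 = qrad k E := by rw [hgdef]; simp only [hy0]; exact hqr.symm
    have hh0 : h 0 = 1 := by rw [hhdef]; simp only [hy0]; exact hxK.2
    have hDf0 : Df 0 = 0 := by rw [hDfdef]; ring
    have hqE'y : ∀ t, qform k E' (y t) = g t + Df t := by
      intro t
      have hid : ∀ i ∈ e.erase v, y t i = x i := by
        intro i hi
        have hiu : i ≠ u := fun hh => hune' (hh ▸ hi)
        have hiv : i ≠ v := fun hh => hvne' (hh ▸ hi)
        exact hyw i hiu hiv t
      rw [hqdiff (y t) hid, hyu, hyv, hgdef, hDfdef]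
    -- derivatives
    have hc_deriv : ∀ w, HasDerivAt (fun t => y t w) (c w) 0 := by
      intro w
      have h1 : HasDerivAt (fun t : ℝ => t * c w) (c w) 0 := by
        simpa using (hasDerivAt_id (0:ℝ)).mul_const (c w)
      simpa [hydef2] using h1.const_add (x w)
    have hgdiff : DifferentiableAt ℝ g 0 := by
      show DifferentiableAt ℝ (fun t => ∑ f ∈ E, ((∑ i ∈ f, y t i ^ k)
        + (k:ℝ) * ∏ i ∈ f, y t i)) 0
      refine DifferentiableAt.fun_sum fun f _ => DifferentiableAt.fun_add ?_ ?_
      · exact DifferentiableAt.fun_sum fun i _ => ((hc_deriv i).differentiableAt).fun_pow k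
      · exact ((DifferentiableAt.fun_finsetProd
          (fun i _ => (hc_deriv i).differentiableAt))).const_mul (k:ℝ)
    have hhdiff : DifferentiableAt ℝ h 0 := by
      show DifferentiableAt ℝ (fun t => ∑ w, y t w ^ k) 0
      exact DifferentiableAt.fun_sum fun i _ => ((hc_deriv i).differentiableAt).fun_pow k
    set G : ℝ := deriv g 0 with hGdef
    set H : ℝ := deriv h 0 with hHdef
    have hgG : HasDerivAt g G 0 := hgdiff.hasDerivAt
    have hhH : HasDerivAt h H 0 := hhdiff.hasDerivAt
    have hτd : HasDerivAt (fun t : ℝ => τ + t) 1 0 := by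
      simpa using (hasDerivAt_id (0:ℝ)).const_add τ
    have hτd' : HasDerivAt (fun t : ℝ => τ - t) (-1) 0 := by
      exact (hasDerivAt_id' (x := (0:ℝ))).const_sub τ
    have hDfd : HasDerivAt Df ((k * τ ^ (k-1) * 1 - k * τ ^ (k-1) * (-1))
        + (k:ℝ) * (1 - (-1)) * P) 0 := by
      rw [hDfdef]
      have h1 : HasDerivAt (fun t : ℝ => (τ + t) ^ k) ((k:ℝ) * (τ + 0) ^ (k-1) * 1) 0 :=
        hτd.pow k
      have h2 : HasDerivAt (fun t : ℝ => (τ - t) ^ k) ((k:ℝ) * (τ - 0) ^ (k-1) * (-1)) 0 :=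
        hτd'.pow k
      have h3 : HasDerivAt (fun t : ℝ => (τ + t) - (τ - t)) (1 - (-1)) 0 := hτd.sub hτd'
      have h4 := (h1.fun_sub h2).fun_add ((h3.const_mul (k:ℝ)).mul_const P)
      simpa [mul_comm, mul_assoc, mul_left_comm] using h4
    set D' : ℝ := (k * τ ^ (k-1) * 1 - k * τ ^ (k-1) * (-1)) + (k:ℝ) * (1 - (-1)) * P
      with hD'def
    have hD'pos : 0 < D' := by
      rw [hD'def]
      have hτk : 0 < τ ^ (k-1) := pow_pos hτpos _
      nlinarith
    -- small t facts
    have hsmall_fact : ∀ t : ℝ, |t| < τ/2 → (∀ w, 0 ≤ y t w) ∧ 0 < h t := by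
      intro t ht
      have hb := abs_lt.mp ht
      have hy_nonneg : ∀ w, 0 ≤ y t w := by
        intro w
        by_cases hwu : w = u
        · subst hwu; rw [hyu]; linarith
        · by_cases hwv : w = v
          · subst hwv; rw [hyv]; linarith
          · rw [hyw w hwu hwv]; exact (hpos w).le
      refine ⟨hy_nonneg, ?_⟩
      have h1 : (y t u) ^ k ≤ h t := by
        rw [hhdef]
        exact Finset.single_le_sum (fun i _ => pow_nonneg (hy_nonneg i) k)
          (Finset.mem_univ u)
      have h2 : 0 < (y t u) ^ k := by
        rw [hyu]
        have : 0 < τ + t := by linarith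
        positivity
      linarith
    have hsmall : ∀ᶠ t in nhds (0:ℝ), |t| < τ/2 := by
      have h1 : Set.Ioo (-(τ/2)) (τ/2) ∈ nhds (0:ℝ) :=
        Ioo_mem_nhds (by linarith) (by linarith)
      filter_upwards [h1] with t ht
      rw [abs_lt]
      exact ⟨ht.1, ht.2⟩
    -- local max of φ
    set φ : ℝ → ℝ := fun t => g t / h t with hφdef
    have hφ0 : φ 0 = qrad k E := by rw [hφdef]; simp [hg0, hh0]
    have hφmax : IsLocalMax φ 0 := by
      filter_upwards [hsmall] with t ht
      obtain ⟨hy_nonneg, hht⟩ := hsmall_fact t ht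
      have hb := qform_le_qrad (V := V) hT.1 (by omega : 1 ≤ k) hy_nonneg
        (by rw [← hhdef] at *; exact hht)
      rw [hφ0, hφdef]
      rw [div_le_iff₀ hht]
      calc g t = qform k E (y t) := rfl
        _ ≤ qrad k E * ∑ w, y t w ^ k := hb
        _ = qrad k E * h t := rfl
    have hφd : HasDerivAt φ ((G * h 0 - g 0 * H) / h 0 ^ 2) 0 :=
      hgG.div hhH (by rw [hh0]; norm_num)
    have hφderiv0 : deriv φ 0 = 0 := hφmax.deriv_eq_zero
    have hGH : G - qrad k E * H = 0 := by
      have := hφd.deriv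
      rw [hφderiv0] at this
      rw [hg0, hh0] at this
      field_simp at this
      linarith
    -- ψ and its derivative
    set ψ : ℝ → ℝ := fun t => (g t + Df t) / h t with hψdef
    have hψ0 : ψ 0 = qrad k E := by rw [hψdef]; simp [hg0, hh0, hDf0]
    have hψd : HasDerivAt ψ (((G + D') * h 0 - (g 0 + Df 0) * H) / h 0 ^ 2) 0 :=
      (hgG.add hDfd).div hhH (by rw [hh0]; norm_num)
    have hψval : ((G + D') * h 0 - (g 0 + Df 0) * H) / h 0 ^ 2 = D' := by
      rw [hg0, hh0, hDf0]
      field_simp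
      linarith [hGH]
    rw [hψval] at hψd
    -- find t > 0 with ψ t > ψ 0
    have hslope := hasDerivAt_iff_tendsto_slope.mp hψd
    have hev : ∀ᶠ t in nhdsWithin (0:ℝ) {(0:ℝ)}ᶜ, 0 < slope ψ 0 t :=
      hslope.eventually_const_lt hD'pos
    have hev2 : ∀ᶠ t in nhdsWithin (0:ℝ) (Set.Ioi 0), 0 < slope ψ 0 t :=
      hev.filter_mono (nhdsWithin_mono 0 (fun t ht => ne_of_gt ht))
    have hev3 : ∀ᶠ t in nhdsWithin (0:ℝ) (Set.Ioi 0), |t| < τ/2 :=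
      (hsmall.filter_mono nhdsWithin_le_nhds)
    have hev4 : ∀ᶠ t in nhdsWithin (0:ℝ) (Set.Ioi 0), (0:ℝ) < t :=
      eventually_mem_nhdsWithin
    obtain ⟨t, hts, htsm', htpos⟩ := (hev2.and (hev3.and hev4)).exists
    have hψt : ψ 0 < ψ t := by
      have h1 : slope ψ 0 t = (ψ t - ψ 0) / t := by
        rw [slope_def_field]
        simp
      rw [h1] at hts
      have := mul_pos hts htpos
      rw [div_mul_cancel₀] at this
      · linarith
      · exact htpos.ne'
    obtain ⟨hy_nonneg, hht⟩ := hsmall_fact t htsm'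
    have hb := qform_le_qrad (V := V) hT'.1 (by omega : 1 ≤ k) hy_nonneg hht
    have hψle : ψ t ≤ qrad k E' := by
      show (g t + Df t) / h t ≤ qrad k E'
      rw [← hqE'y t, div_le_iff₀ hht]
      calc qform k E' (y t) ≤ qrad k E' * ∑ w, y t w ^ k := hb
        _ = qrad k E' * h t := rfl
    rw [hψ0] at hψt
    linarith

lemma no_two_branch [Nonempty V] (hT : IsSupertree k E) (hk : 2 ≤ k)
    (hmax : ∀ E'' : Finset (Finset V), IsSupertree k E'' →
      pendentCount E'' = pendentCount E → qrad k E'' ≤ qrad k E)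
    {u v : V} (huv : u ≠ v) (hdu : 3 ≤ degree E u) (hdv : 3 ≤ degree E v) : False := by
  obtain ⟨x, hxK, hqr, hmaxx⟩ := exists_maximizer (V := V) (by omega : 1 ≤ k) E
  have hpos := maximizer_pos hT hk hxK hqr hmaxx
  rcases le_total (x v) (x u) with hle | hle
  · exact spectral_move_contra hT hk hxK hqr hpos huv hdu hdv hle hmax
  · exact spectral_move_contra hT hk hxK hqr hpos (Ne.symm huv) hdv hdu hle hmax

end Gsec

/-- a maximizer of the signless Laplacian spectral radius among
`k`-uniform supertrees with `n` vertices and `q` pendent vertices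
(`n - m + 1 ≤ q ≤ n - 2`) has degree sequence `(q+1+m-n, 2,…,2, 1,…,1)` with
`n-q-1` twos and `q` ones. -/
theorem max_pendent_degree_sequence (k n m q : ℕ) (hk : 2 ≤ k)
    {V : Type*} [Fintype V] [DecidableEq V]
    (E : Finset (Finset V)) (hG : IsSupertree k E)
    (hn : Fintype.card V = n) (hm : E.card = m)
    (hq : pendentCount E = q)
    (hq1 : n - m + 1 ≤ q) (hq2 : q ≤ n - 2)
    (hmax : ∀ E' : Finset (Finset V), IsSupertree k E' → pendentCount E' = q →
      qrad k E' ≤ qrad k E) :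
    degSeq E = (q + 1 + m - n) ::ₘ (Multiset.replicate (n - q - 1) 2 +
      Multiset.replicate q 1) := by
  classical
  have hq0 : 1 ≤ q := by omega
  have hn3 : 3 ≤ n := by omega
  have hV2 : 2 ≤ Fintype.card V := by omega
  have hNV : Nonempty V := Fintype.card_pos_iff.mp (by omega)
  have hcount : n = (k-1) * m + 1 := by
    have := supertree_card hG hk hV2
    rw [hn, hm] at this
    exact this
  have hkm : ∑ v, degree E v = k * m := by
    rw [← hm]
    exact sum_degree_uniform hG.1
  have hdpos : ∀ v, 1 ≤ degree E v := fun v => degree_pos hG hV2 v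
  have hmax' : ∀ E'' : Finset (Finset V), IsSupertree k E'' →
      pendentCount E'' = pendentCount E → qrad k E'' ≤ qrad k E :=
    fun E'' h1 h2 => hmax E'' h1 (h2.trans hq)
  set S1 := Finset.univ.filter (fun v : V => degree E v = 1) with hS1def
  set N := Finset.univ.filter (fun v : V => ¬ degree E v = 1) with hNdef
  set S2 := N.filter (fun v : V => degree E v = 2) with hS2def
  set S3 := N.filter (fun v : V => ¬ degree E v = 2) with hS3def
  have hS1card : S1.card = q := hq
  have hS1mem : ∀ v ∈ S1, degree E v = 1 := by
    intro v hv
    rw [hS1def, Finset.mem_filter] at hv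
    exact hv.2
  have hS2mem : ∀ v ∈ S2, degree E v = 2 := by
    intro v hv
    rw [hS2def, Finset.mem_filter] at hv
    exact hv.2
  have hS3big : ∀ v ∈ S3, 3 ≤ degree E v := by
    intro v hv
    rw [hS3def, Finset.mem_filter, hNdef, Finset.mem_filter] at hv
    have := hdpos v
    omega
  have hS3le : S3.card ≤ 1 := by
    by_contra hcon
    push_neg at hcon
    obtain ⟨a, ha, b, hb, hab⟩ := Finset.one_lt_card.mp hcon
    exact no_two_branch hG hk hmax' hab (hS3big a ha) (hS3big b hb)
  have hcards1 : S1.card + N.card = n := by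
    rw [hS1def, hNdef, Finset.card_filter_add_card_filter_not, Finset.card_univ, hn]
  have hcards2 : S2.card + S3.card = N.card := by
    rw [hS2def, hS3def, Finset.card_filter_add_card_filter_not]
  have hsum1 : ∑ v, degree E v = (∑ v ∈ S1, degree E v) + ∑ v ∈ N, degree E v := by
    rw [hS1def, hNdef, Finset.sum_filter_add_sum_filter_not]
  have hsum2 : ∑ v ∈ N, degree E v = (∑ v ∈ S2, degree E v) + ∑ v ∈ S3, degree E v := by
    rw [hS2def, hS3def, Finset.sum_filter_add_sum_filter_not]
  have hS1sum : ∑ v ∈ S1, degree E v = q := by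
    rw [Finset.sum_congr rfl hS1mem, Finset.sum_const, smul_eq_mul, mul_one, hS1card]
  have hS2sum : ∑ v ∈ S2, degree E v = 2 * S2.card := by
    rw [Finset.sum_congr rfl hS2mem, Finset.sum_const, smul_eq_mul, mul_comm]
  have hdeg_decomp : degSeq E =
      S1.val.map (degree E) + S2.val.map (degree E) + S3.val.map (degree E) := by
    show Finset.univ.val.map (degree E) = _
    have h1 : Finset.univ.val = S1.val + N.val := by
      rw [hS1def, hNdef, Finset.filter_val, Finset.filter_val]
      exact (Multiset.filter_add_not _ _).symm
    have h2 : N.val = S2.val + S3.val := by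
      rw [hS2def, hS3def, Finset.filter_val, Finset.filter_val]
      exact (Multiset.filter_add_not _ _).symm
    rw [h1, h2, Multiset.map_add, Multiset.map_add, add_assoc]
  have hmap1 : S1.val.map (degree E) = Multiset.replicate q 1 := by
    rw [Multiset.eq_replicate]
    refine ⟨by rw [Multiset.card_map]; exact hS1card, ?_⟩
    intro b hb
    obtain ⟨a, ha, rfl⟩ := Multiset.mem_map.mp hb
    exact hS1mem a (Finset.mem_val.mp ha)
  have hmap2 : S2.val.map (degree E) = Multiset.replicate S2.card 2 := by
    rw [Multiset.eq_replicate]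
    refine ⟨by rw [Multiset.card_map]; rfl, ?_⟩
    intro b hb
    obtain ⟨a, ha, rfl⟩ := Multiset.mem_map.mp hb
    exact hS2mem a (Finset.mem_val.mp ha)
  have hmul : (k-1)*m = k*m - m := by
    rw [Nat.sub_one_mul]
  have hmle : m ≤ k*m := Nat.le_mul_of_pos_left m (by omega)
  rcases (by omega : S3.card = 0 ∨ S3.card = 1) with hc3 | hc3
  · have hS3empty : S3 = ∅ := Finset.card_eq_zero.mp hc3
    have hS3sum : ∑ v ∈ S3, degree E v = 0 := by rw [hS3empty]; simp
    have hS2card : S2.card = n - q := by omega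
    have hDelta : q + 1 + m - n = 2 := by omega
    rw [hdeg_decomp, hmap1, hmap2, hDelta, hS3empty]
    simp only [Finset.empty_val, Multiset.map_zero, add_zero]
    rw [← Multiset.cons_add]
    rw [show (2 ::ₘ Multiset.replicate (n - q - 1) 2) = Multiset.replicate (n - q) 2 by
      rw [← Multiset.replicate_succ]; congr 1; omega]
    rw [hS2card]
    exact add_comm _ _
  · obtain ⟨w, hwS3⟩ := Finset.card_eq_one.mp hc3
    have hS2card : S2.card = n - q - 1 := by omega
    have hw3 : 3 ≤ degree E w := hS3big w (by rw [hwS3]; simp)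
    have hS3sum : ∑ v ∈ S3, degree E v = degree E w := by rw [hwS3]; simp
    have hDelta : degree E w = q + 1 + m - n := by omega
    have hmap3 : S3.val.map (degree E) = {degree E w} := by
      rw [hwS3]
      simp
    rw [hdeg_decomp, hmap1, hmap2, hmap3, hS2card, hDelta]
    rw [← Multiset.singleton_add]
    rw [add_comm (Multiset.replicate q 1) (Multiset.replicate (n-q-1) 2)]
    exact add_comm _ _

end SLT
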